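/- arXiv:2409.14654 — 2 statements merged into one kernel-verified Lean document; each statement's English description precedes it below -/
import Mathlib

section
/- There is a one-to-one correspondence between Ψ-runs and BWT runs: for each symbol c, the p-th maximal run of consecutive values within Ψ_c (the restriction of Ψ to suffix-array positions whose suffixes start with c) corresponds to the p-th maximal BWT run of symbol c; in particular the image under Ψ of each Ψ-run of Ψ_c is exactly an interval of BWT positions all holding symbol c maximal among such intervals, and hence r = Σ_c r_c, where r_c is the number of Ψ-runs in Ψ_c. -/
/-- The suffix of `T` starting at position `i` (0-based), as a list. -/
def sufList {n : ℕ} (T : Fin (n+1) → ℕ) (i : Fin (n+1)) : List ℕ :=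
  (List.ofFn T).drop i

/-- `SA` is the suffix array of `T`: it lists suffixes in increasing lexicographic order. -/
def IsSA {n : ℕ} (T : Fin (n+1) → ℕ) (SA : Equiv.Perm (Fin (n+1))) : Prop :=
  ∀ i j : Fin (n+1), i < j → List.Lex (· < ·) (sufList T (SA i)) (sufList T (SA j))

/-- The last symbol of `T` is a unique terminator, strictly smaller than every other symbol. -/
def Terminator {n : ℕ} (T : Fin (n+1) → ℕ) : Prop :=
  ∀ i : Fin (n+1), i ≠ Fin.last n → T (Fin.last n) < T i

/-- Ψ(i) = SA⁻¹[(SA[i] mod n) + 1] (0-based, circular via `Fin` addition). -/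
def psi {n : ℕ} (SA : Equiv.Perm (Fin (n+1))) (i : Fin (n+1)) : Fin (n+1) :=
  SA.symm (SA i + 1)

/-- BWT[j] = T[SA[j] - 1] (circularly). -/
def bwt {n : ℕ} (T : Fin (n+1) → ℕ) (SA : Equiv.Perm (Fin (n+1))) (j : Fin (n+1)) : ℕ :=
  T (SA j - 1)

/-- LF(i): the suffix-array position of SA[i] − 1 (circularly). -/
def lf {n : ℕ} (SA : Equiv.Perm (Fin (n+1))) (i : Fin (n+1)) : Fin (n+1) :=
  SA.symm (SA i - 1)

/-- C[c]: the number of characters of `T` smaller than `c`. -/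
def cnt {n : ℕ} (T : Fin (n+1) → ℕ) (c : ℕ) : ℕ :=
  (Finset.univ.filter fun i : Fin (n+1) => T i < c).card

/-- rank_c(f, i): number of occurrences of `c` in `f` at positions ≤ i (inclusive rank). -/
def rankIncl {n : ℕ} (f : Fin (n+1) → ℕ) (c : ℕ) (i : Fin (n+1)) : ℕ :=
  (Finset.univ.filter fun j : Fin (n+1) => j ≤ i ∧ f j = c).card

/-- number of occurrences of `c` strictly before position `i`. -/
def rankBefore {n : ℕ} (f : Fin (n+1) → ℕ) (c : ℕ) (i : Fin (n+1)) : ℕ :=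
  (Finset.univ.filter fun j : Fin (n+1) => j < i ∧ f j = c).card

/-- LF via the counting formula, as a natural number (0-based). -/
def lfCount {n : ℕ} (T : Fin (n+1) → ℕ) (SA : Equiv.Perm (Fin (n+1))) (i : Fin (n+1)) : ℕ :=
  cnt T (bwt T SA i) + rankIncl (bwt T SA) (bwt T SA i) i - 1

/-- Position `j` is not the last element of its Ψ-run. -/
def NotLastInRun {n : ℕ} (T : Fin (n+1) → ℕ) (SA : Equiv.Perm (Fin (n+1)))
    (j : Fin (n+1)) : Prop :=
  j.val < n ∧ T (SA j) = T (SA (j+1)) ∧ ((psi SA (j+1) : ℕ) = (psi SA j : ℕ) + 1)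

/-- `j` starts a Ψ-run (a run of consecutive Ψ-values within one character class). -/
def PsiRunHead {n : ℕ} (T : Fin (n+1) → ℕ) (SA : Equiv.Perm (Fin (n+1)))
    (j : Fin (n+1)) : Prop :=
  j = 0 ∨ T (SA (j-1)) ≠ T (SA j) ∨ (psi SA j : ℕ) ≠ (psi SA (j-1) : ℕ) + 1

/-- `j` starts a BWT run. -/
def BwtRunHead {n : ℕ} (T : Fin (n+1) → ℕ) (SA : Equiv.Perm (Fin (n+1)))
    (j : Fin (n+1)) : Prop :=
  j = 0 ∨ bwt T SA j ≠ bwt T SA (j-1)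

attribute [local instance] Classical.propDecidable

section Aux

variable {n : ℕ}

lemma sufList_head (T : Fin (n+1) → ℕ) (i : Fin (n+1)) :
    sufList T i = T i :: (List.ofFn T).drop (i.val + 1) := by
  unfold sufList
  rw [List.drop_eq_getElem_cons (by simpa using i.isLt)]
  congr 1
  rw [List.getElem_ofFn]

lemma sufList_eq_cons (T : Fin (n+1) → ℕ) (i : Fin (n+1)) (h : i.val < n) :
    sufList T i = T i :: sufList T (i+1) := by
  rw [sufList_head]
  congr 1
  unfold sufList
  congr 1
  rw [Fin.val_add_one_of_lt]
  exact Fin.lt_last_iff_ne_last.mpr (by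
    intro hiv; rw [hiv] at h; simp at h)

lemma lex_cons_cases {a b : ℕ} {l₁ l₂ : List ℕ}
    (h : List.Lex (· < ·) (a :: l₁) (b :: l₂)) :
    a < b ∨ (a = b ∧ List.Lex (· < ·) l₁ l₂) := by
  cases h with
  | cons h => exact Or.inr ⟨rfl, h⟩
  | rel h => exact Or.inl h

lemma lex_asymm : ∀ {l₁ l₂ : List ℕ},
    List.Lex (· < ·) l₁ l₂ → ¬ List.Lex (· < ·) l₂ l₁ := by
  intro l₁ l₂ h
  induction h with
  | nil => exact List.not_lex_nil
  | @cons a l₁ l₂ h ih =>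
      intro h'
      rcases lex_cons_cases h' with h'' | ⟨_, h''⟩
      · exact lt_irrefl _ h''
      · exact ih h''
  | @rel a₁ l₁ a₂ l₂ h =>
      intro h'
      rcases lex_cons_cases h' with h'' | ⟨h'', _⟩
      · exact lt_asymm h h''
      · exact lt_irrefl _ (h'' ▸ h)

lemma lt_of_suf_lex {T : Fin (n+1) → ℕ} {SA : Equiv.Perm (Fin (n+1))}
    (hSA : IsSA T SA) {i j : Fin (n+1)}
    (h : List.Lex (· < ·) (sufList T (SA i)) (sufList T (SA j))) : i < j := by
  rcases lt_trichotomy i j with h' | h' | h'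
  · exact h'
  · subst h'; exact absurd h (lex_asymm h)
  · exact absurd (hSA j i h') (lex_asymm h)

lemma char_mono {T : Fin (n+1) → ℕ} {SA : Equiv.Perm (Fin (n+1))}
    (hSA : IsSA T SA) {i j : Fin (n+1)} (h : i < j) : T (SA i) ≤ T (SA j) := by
  have hl := hSA i j h
  rw [sufList_head T (SA i), sufList_head T (SA j)] at hl
  rcases lex_cons_cases hl with h' | ⟨h', _⟩
  · exact le_of_lt h'
  · exact le_of_eq h'

lemma SA_ne_last {T : Fin (n+1) → ℕ} {SA : Equiv.Perm (Fin (n+1))}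
    (hT : Terminator T) {i j : Fin (n+1)} (hij : i ≠ j) (hc : T (SA i) = T (SA j)) :
    SA i ≠ Fin.last n := by
  intro h
  have hj : SA j ≠ Fin.last n := fun h' => hij (SA.injective (h.trans h'.symm))
  have := hT (SA j) hj
  rw [← h, hc] at this
  exact lt_irrefl _ this

lemma psi_mono {T : Fin (n+1) → ℕ} {SA : Equiv.Perm (Fin (n+1))}
    (hSA : IsSA T SA) (hT : Terminator T) {i j : Fin (n+1)}
    (hij : i < j) (hc : T (SA i) = T (SA j)) : psi SA i < psi SA j := by
  have hi : SA i ≠ Fin.last n := SA_ne_last hT (ne_of_lt hij) hc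
  have hj : SA j ≠ Fin.last n := SA_ne_last hT (ne_of_gt hij) hc.symm
  have hli : (SA i).val < n := Fin.lt_last_iff_ne_last.mpr hi
  have hlj : (SA j).val < n := Fin.lt_last_iff_ne_last.mpr hj
  have h1 := hSA i j hij
  rw [sufList_eq_cons T (SA i) hli, sufList_eq_cons T (SA j) hlj] at h1
  rcases lex_cons_cases h1 with h | ⟨_, h⟩
  · rw [hc] at h; exact absurd h (lt_irrefl _)
  · have e1 : SA (psi SA i) = SA i + 1 := SA.apply_symm_apply _
    have e2 : SA (psi SA j) = SA j + 1 := SA.apply_symm_apply _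
    rw [← e1, ← e2] at h
    exact lt_of_suf_lex hSA h

lemma bwt_psi (T : Fin (n+1) → ℕ) (SA : Equiv.Perm (Fin (n+1))) (j : Fin (n+1)) :
    bwt T SA (psi SA j) = T (SA j) := by
  unfold bwt psi
  rw [SA.apply_symm_apply, add_sub_cancel_right]

lemma psi_inj (SA : Equiv.Perm (Fin (n+1))) {i j : Fin (n+1)}
    (h : psi SA i = psi SA j) : i = j := by
  unfold psi at h
  have h1 := SA.symm.injective h
  exact SA.injective (add_right_cancel h1)

lemma key_iff {T : Fin (n+1) → ℕ} {SA : Equiv.Perm (Fin (n+1))}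
    (hSA : IsSA T SA) (hT : Terminator T) (j : Fin (n+1)) :
    (¬ PsiRunHead T SA j) ↔ (¬ BwtRunHead T SA (psi SA j)) := by
  unfold PsiRunHead BwtRunHead
  push_neg
  constructor
  · rintro ⟨h0, hc, hp⟩
    have hne : psi SA j ≠ 0 := by
      intro h; rw [h] at hp; simp at hp
    refine ⟨hne, ?_⟩
    have hsub : psi SA j - 1 = psi SA (j-1) := by
      apply Fin.ext
      rw [Fin.coe_sub_one, if_neg hne, hp]
      simp
    rw [hsub, bwt_psi, bwt_psi, hc]
  · rintro ⟨h0, hb⟩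
    set k : Fin (n+1) := SA.symm (SA (psi SA j - 1) - 1) with hk
    have hpk : psi SA k = psi SA j - 1 := by
      show SA.symm (SA k + 1) = psi SA j - 1
      rw [hk, SA.apply_symm_apply, sub_add_cancel, SA.symm_apply_apply]
    have hck : T (SA k) = T (SA j) := by
      have h1 : T (SA k) = bwt T SA (psi SA j - 1) := by
        unfold bwt; rw [hk, SA.apply_symm_apply]
      rw [h1, ← hb, bwt_psi]
    have hjpos : 0 < (psi SA j).val := Fin.pos_iff_ne_zero.mpr h0
    have hval : (psi SA k).val + 1 = (psi SA j).val := by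
      rw [hpk, Fin.coe_sub_one, if_neg h0]; omega
    have hkj : k < j := by
      rcases lt_trichotomy k j with h | h | h
      · exact h
      · exfalso; rw [h] at hval; omega
      · exfalso
        have := psi_mono hSA hT h hck.symm
        have := Fin.lt_iff_val_lt_val.mp this
        omega
    have hjne : j ≠ 0 := by
      intro h; rw [h] at hkj; exact absurd hkj (Fin.not_lt_zero _)
    have hk1 : k = j - 1 := by
      by_contra hne
      have hkv : k.val + 1 < j.val := by
        have h1 : k.val < j.val := Fin.lt_iff_val_lt_val.mp hkj
        rcases Nat.lt_or_ge (k.val + 1) j.val with h2 | h2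
        · exact h2
        · exfalso
          apply hne
          apply Fin.ext
          rw [Fin.coe_sub_one, if_neg hjne]
          omega
      set m : Fin (n+1) := ⟨j.val - 1, by omega⟩ with hm
      have hkm : k < m := Fin.lt_iff_val_lt_val.mpr (by simp [hm]; omega)
      have hmj : m < j := Fin.lt_iff_val_lt_val.mpr (by show j.val - 1 < j.val; omega)
      have hcm : T (SA k) = T (SA m) ∧ T (SA m) = T (SA j) := by
        have h1 := char_mono hSA hkm
        have h2 := char_mono hSA hmj
        omega
      have p1 := Fin.lt_iff_val_lt_val.mp (psi_mono hSA hT hkm hcm.1)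
      have p2 := Fin.lt_iff_val_lt_val.mp (psi_mono hSA hT hmj hcm.2)
      omega
    refine ⟨hjne, ?_, ?_⟩
    · rw [← hk1]; exact hck
    · rw [← hk1]; omega

end Aux

/-- for each symbol c, the number r_c of Ψ-runs inside the character class
of c equals the number of BWT runs of symbol c; hence r = Σ_c r_c. -/
theorem psi_runs_eq_bwt_runs {n : ℕ} (T : Fin (n+1) → ℕ) (SA : Equiv.Perm (Fin (n+1)))
    (hSA : IsSA T SA) (hT : Terminator T) :
    (∀ c : ℕ,
      (Finset.univ.filter fun j : Fin (n+1) => PsiRunHead T SA j ∧ T (SA j) = c).card =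
      (Finset.univ.filter fun j : Fin (n+1) => BwtRunHead T SA j ∧ bwt T SA j = c).card) ∧
    (Finset.univ.filter fun j : Fin (n+1) => BwtRunHead T SA j).card =
      ∑ c ∈ Finset.univ.image T,
        (Finset.univ.filter fun j : Fin (n+1) => PsiRunHead T SA j ∧ T (SA j) = c).card := by
  have main : ∀ c : ℕ,
      (Finset.univ.filter fun j : Fin (n+1) => PsiRunHead T SA j ∧ T (SA j) = c).card =
      (Finset.univ.filter fun j : Fin (n+1) => BwtRunHead T SA j ∧ bwt T SA j = c).card := by
    intro c
    apply Finset.card_bij (fun j _ => psi SA j)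
    · intro a ha
      rw [Finset.mem_filter] at ha ⊢
      obtain ⟨_, hhead, hc⟩ := ha
      refine ⟨Finset.mem_univ _, ?_, by rw [bwt_psi]; exact hc⟩
      by_contra hb
      exact (key_iff hSA hT a).mpr hb hhead
    · intro a₁ _ a₂ _ h
      exact psi_inj SA h
    · intro b hb
      rw [Finset.mem_filter] at hb
      obtain ⟨_, hhead, hc⟩ := hb
      refine ⟨SA.symm (SA b - 1), ?_, ?_⟩
      · have hpb : psi SA (SA.symm (SA b - 1)) = b := by
          unfold psi; rw [SA.apply_symm_apply, sub_add_cancel, SA.symm_apply_apply]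
        rw [Finset.mem_filter]
        refine ⟨Finset.mem_univ _, ?_, ?_⟩
        · by_contra h
          have := (key_iff hSA hT _).mp h
          rw [hpb] at this
          exact this hhead
        · have : T (SA (SA.symm (SA b - 1))) = bwt T SA b := by
            unfold bwt; rw [SA.apply_symm_apply]
          rw [this]; exact hc
      · unfold psi; rw [SA.apply_symm_apply, sub_add_cancel, SA.symm_apply_apply]
  refine ⟨main, ?_⟩
  have hmap : ∀ j ∈ (Finset.univ.filter fun j : Fin (n+1) => BwtRunHead T SA j),
      bwt T SA j ∈ Finset.univ.image T := by
    intro j _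
    exact Finset.mem_image.mpr ⟨SA j - 1, Finset.mem_univ _, rfl⟩
  rw [Finset.card_eq_sum_card_fiberwise hmap]
  apply Finset.sum_congr rfl
  intro c _
  rw [main c]
  congr 1
  rw [Finset.filter_filter]
end

section
/- (Key property of subsampling) After the sequential subsampling process, any three consecutive remaining samples t_{i−1} < t_i < t_{i+1} satisfy t_{i+1} − t_{i−1} > s. Equivalently, any interval of s+1 consecutive integers contains at most 2 remaining samples. -/
/-- One step of the sequential subsampling: when processing candidate `u (k+1)`,
remove it iff the next original sample `u (k+2)` and the nearest remaining sample
to the left of `u (k+1)` are at distance ≤ s. -/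
def subsampleStep (s : ℕ) (u : ℕ → ℕ) (k : ℕ) (S : Finset ℕ) : Finset ℕ :=
  if u (k+2) - ((S.filter fun x => x < u (k+1)).max.getD 0) ≤ s
  then S.erase (u (k+1)) else S

/-- State after processing the first `k` candidates (candidates are u 1, u 2, …, in order). -/
def subsampleIter (s : ℕ) (u : ℕ → ℕ) (r : ℕ) : ℕ → Finset ℕ
  | 0 => (Finset.range r).image u
  | k+1 => subsampleStep s u k (subsampleIter s u r k)

/-- Remaining samples after the whole sequential subsampling process
(processing u 1, …, u (r−2), i.e. the 1-based samples u_2, …, u_{r−1}). -/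
def subsample (s : ℕ) (u : ℕ → ℕ) (r : ℕ) : Finset ℕ :=
  subsampleIter s u r (r - 2)

lemma subsampleStep_subset (s : ℕ) (u : ℕ → ℕ) (k : ℕ) (S : Finset ℕ) :
    subsampleStep s u k S ⊆ S := by
  unfold subsampleStep
  split
  · exact Finset.erase_subset _ _
  · exact subset_rfl

lemma subsampleIter_subset (s : ℕ) (u : ℕ → ℕ) (r k : ℕ) :
    subsampleIter s u r k ⊆ (Finset.range r).image u := by
  induction k with
  | zero => exact subset_rfl
  | succ k ih => exact (subsampleStep_subset s u k _).trans ih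

lemma subsample_inv (r s : ℕ) (u : ℕ → ℕ) (hmono : StrictMonoOn u (Set.Iio r)) :
    ∀ k, k ≤ r - 2 → ∀ j, 1 ≤ j → j ≤ k →
      u j ∈ subsampleIter s u r k →
      ∀ x ∈ subsampleIter s u r k, ∀ y ∈ subsampleIter s u r k,
        x < u j → u j < y → s < y - x := by
  intro k
  induction k with
  | zero => intro _ j h1 h0 _ _ _ _ _ _ _; omega
  | succ k ih =>
    intro hk j hj1 hjk hbj x hx y hy hxb hby
    have hsub : subsampleIter s u r (k+1) ⊆ subsampleIter s u r k :=
      subsampleStep_subset s u k _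
    rcases Nat.lt_or_ge j (k+1) with hlt | hge
    · exact ih (by omega) j hj1 (by omega) (hsub hbj) x (hsub hx) y (hsub hy) hxb hby
    · have hj : j = k + 1 := by omega
      subst hj
      have hkr : k + 3 ≤ r := by omega
      set t := ((subsampleIter s u r k).filter fun z => z < u (k+1)).max.getD 0 with ht
      have hcond : ¬ (u (k+2) - t ≤ s) := by
        intro hc
        have heq : subsampleIter s u r (k+1)
            = (subsampleIter s u r k).erase (u (k+1)) := by
          show subsampleStep s u k _ = _
          rw [subsampleStep, if_pos hc]
        rw [heq] at hbj
        exact (Finset.notMem_erase _ _) hbj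
      have hxf : x ∈ (subsampleIter s u r k).filter fun z => z < u (k+1) :=
        Finset.mem_filter.2 ⟨hsub hx, hxb⟩
      have hxt : x ≤ t := by
        obtain ⟨m, hm⟩ := Finset.max_of_mem hxf
        have h1 := Finset.le_max hxf
        rw [hm] at h1
        have : x ≤ m := WithBot.coe_le_coe.mp h1
        rw [ht, hm]
        exact this
      obtain ⟨l, hlr, hl⟩ : ∃ l, l < r ∧ u l = y := by
        have hy0 := subsampleIter_subset s u r k (hsub hy)
        simpa [Finset.mem_image, Finset.mem_range] using hy0
      have hk1l : k + 1 < l := by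
        have := (hmono.lt_iff_lt (show (k+1 : ℕ) ∈ Set.Iio r by
          simp only [Set.mem_Iio]; omega) (show l ∈ Set.Iio r from hlr)).mpr
        by_contra hcon
        push_neg at hcon
        have hle : u l ≤ u (k+1) := by
          rcases Nat.lt_or_ge l (k+1) with h' | h'
          · exact le_of_lt (hmono (show l ∈ Set.Iio r from hlr)
              (show (k+1 : ℕ) ∈ Set.Iio r by simp only [Set.mem_Iio]; omega) h')
          · have : l = k + 1 := by omega
            rw [this]
        rw [hl] at hle
        omega
      have hy2 : u (k+2) ≤ y := by
        rw [← hl]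
        rcases Nat.lt_or_ge (k+2) l with h' | h'
        · exact le_of_lt (hmono (show (k+2 : ℕ) ∈ Set.Iio r by
            simp only [Set.mem_Iio]; omega) (show l ∈ Set.Iio r from hlr) h')
        · have : l = k + 2 := by omega
          rw [this]
      omega

/-- any three remaining samples a < b < c satisfy c − a > s; equivalently,
any window of s+1 consecutive integers contains at most 2 remaining samples. -/
theorem subsample_spread (n r s : ℕ) (u : ℕ → ℕ)
    (hs : 1 ≤ s) (hmono : StrictMonoOn u (Set.Iio r))
    (hbounds : ∀ i < r, 1 ≤ u i ∧ u i ≤ n) :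
    (∀ a b c : ℕ, a ∈ subsample s u r → b ∈ subsample s u r → c ∈ subsample s u r →
      a < b → b < c → s < c - a) ∧
    (∀ a : ℕ, ((subsample s u r).filter fun x => a ≤ x ∧ x ≤ a + s).card ≤ 2) := by
  have h1 : ∀ a b c : ℕ, a ∈ subsample s u r → b ∈ subsample s u r →
      c ∈ subsample s u r → a < b → b < c → s < c - a := by
    intro a b c ha hb hc hab hbc
    obtain ⟨i, hir, hia⟩ : ∃ i, i < r ∧ u i = a := by
      have := subsampleIter_subset s u r (r-2) ha
      simpa [Finset.mem_image, Finset.mem_range] using this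
    obtain ⟨j, hjr, hjb⟩ : ∃ j, j < r ∧ u j = b := by
      have := subsampleIter_subset s u r (r-2) hb
      simpa [Finset.mem_image, Finset.mem_range] using this
    obtain ⟨l, hlr, hlc⟩ : ∃ l, l < r ∧ u l = c := by
      have := subsampleIter_subset s u r (r-2) hc
      simpa [Finset.mem_image, Finset.mem_range] using this
    have hij : i < j := by
      have := (hmono.lt_iff_lt (show i ∈ Set.Iio r from hir)
        (show j ∈ Set.Iio r from hjr)).mp (by rw [hia, hjb]; exact hab)
      exact this
    have hjl : j < l := by
      exact (hmono.lt_iff_lt (show j ∈ Set.Iio r from hjr)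
        (show l ∈ Set.Iio r from hlr)).mp (by rw [hjb, hlc]; exact hbc)
    have hb' : u j ∈ subsampleIter s u r (r - 2) := by rw [hjb]; exact hb
    exact subsample_inv r s u hmono (r - 2) le_rfl j (by omega) (by omega)
      hb' a ha c hc (by rw [hjb]; exact hab) (by rw [hjb]; exact hbc)
  refine ⟨h1, ?_⟩
  intro a
  by_contra hcontra
  push_neg at hcontra
  set F := (subsample s u r).filter fun x => a ≤ x ∧ x ≤ a + s with hF
  have hne : F.Nonempty := Finset.card_pos.mp (by omega)
  set xm := F.min' hne with hxm
  set xM := F.max' hne with hxM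
  have hlt : xm < xM := Finset.min'_lt_max'_of_card F (by omega)
  have hxmF : xm ∈ F := F.min'_mem hne
  have hxMF : xM ∈ F := F.max'_mem hne
  have hxMe : xM ∈ F.erase xm := Finset.mem_erase.2 ⟨by omega, hxMF⟩
  have hcard : 0 < ((F.erase xm).erase xM).card := by
    rw [Finset.card_erase_of_mem hxMe, Finset.card_erase_of_mem hxmF]
    omega
  obtain ⟨y, hy⟩ := Finset.card_pos.mp hcard
  have hyF : y ∈ F := Finset.mem_of_mem_erase (Finset.mem_of_mem_erase hy)
  have hyxm : y ≠ xm := (Finset.mem_erase.1 (Finset.mem_of_mem_erase hy)).1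
  have hyxM : y ≠ xM := (Finset.mem_erase.1 hy).1
  have h2 : xm ≤ y := F.min'_le y hyF
  have h3 : y ≤ xM := F.le_max' y hyF
  have hxmS : xm ∈ subsample s u r := (Finset.mem_filter.1 hxmF).1
  have hyS : y ∈ subsample s u r := (Finset.mem_filter.1 hyF).1
  have hxMS : xM ∈ subsample s u r := (Finset.mem_filter.1 hxMF).1
  have hb1 := (Finset.mem_filter.1 hxmF).2
  have hb2 := (Finset.mem_filter.1 hxMF).2
  have := h1 xm y xM hxmS hyS hxMS (by omega) (by omega)
  omega
end
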